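/- Let r ≥ 1 be a natural number and ε > 0. If x₁, ..., x_{2r+3} are nonnegative reals with each xᵢ ≤ 1/(r+1) - ε and ∑ᵢ xᵢ = 1, then ∑ᵢ xᵢ² ≤ (r+1)(1/(r+1) - ε)² + ((r+1)ε)². -/

import Mathlib

lemma key_lemma {ι : Type*} (M : ℝ) :
    ∀ (s : Finset ι) (x : ι → ℝ), (∀ i ∈ s, 0 ≤ x i) → (∀ i ∈ s, x i ≤ M) →
    ∀ (q : ℕ) (ρ : ℝ), 0 ≤ ρ → ρ ≤ M → (∑ i ∈ s, x i) = q * M + ρ →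
    ∑ i ∈ s, (x i)^2 ≤ q * M^2 + ρ^2 := by
  intro s
  induction s using Finset.cons_induction with
  | empty =>
    intro x _ _ q ρ hρ0 hρM hs
    simp only [Finset.sum_empty] at *
    positivity
  | cons a s ha IH =>
    intro x hx0 hxM q ρ hρ0 hρM hs
    rw [Finset.sum_cons] at hs ⊢
    have ha0 : 0 ≤ x a := hx0 a (Finset.mem_cons_self a s)
    have haM : x a ≤ M := hxM a (Finset.mem_cons_self a s)
    have hx0' : ∀ i ∈ s, 0 ≤ x i := fun i hi => hx0 i (Finset.mem_cons_of_mem hi)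
    have hxM' : ∀ i ∈ s, x i ≤ M := fun i hi => hxM i (Finset.mem_cons_of_mem hi)
    rcases le_or_gt (x a) ρ with hcase | hcase
    · have h := IH x hx0' hxM' q (ρ - x a) (by linarith) (by linarith)
        (by linarith)
      nlinarith [mul_nonneg ha0 (sub_nonneg.2 hcase)]
    · -- need q ≥ 1
      have hsn : 0 ≤ ∑ i ∈ s, x i := Finset.sum_nonneg hx0'
      have hM0 : 0 ≤ M := le_trans ha0 haM
      have hq1 : 1 ≤ q := by
        by_contra h
        push_neg at h
        interval_cases q
        simp at hs
        linarith
      obtain ⟨q', rfl⟩ : ∃ q', q = q' + 1 := ⟨q - 1, (Nat.succ_pred_eq_of_pos hq1).symm⟩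
      have h := IH x hx0' hxM' q' (M + ρ - x a) (by linarith) (by linarith)
        (by push_cast at hs ⊢; linarith)
      have hprod : 0 ≤ (M - x a) * (x a - ρ) :=
        mul_nonneg (by linarith) (by linarith)
      push_cast at h ⊢
      nlinarith

theorem stmt_8 (r : ℕ) (hr : 1 ≤ r) (ε : ℝ) (hε : 0 < ε)
    (x : Fin (2*r+3) → ℝ) (h0 : ∀ i, 0 ≤ x i)
    (hub : ∀ i, x i ≤ 1/(r+1) - ε) (hsum : ∑ i, x i = 1) :
    ∑ i, (x i)^2 ≤ (r+1) * (1/(r+1) - ε)^2 + ((r+1)*ε)^2 := by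
  set M : ℝ := 1/(r+1) - ε with hM
  have hM0 : 0 ≤ M := le_trans (h0 0) (hub 0)
  have hr1 : (0:ℝ) < (r:ℝ) + 1 := by positivity
  have hid : ((r:ℝ)+1) * M + ((r:ℝ)+1)*ε = 1 := by
    rw [hM, mul_sub, mul_one_div_cancel hr1.ne']; ring
  rcases le_or_gt (((r:ℝ)+1)*ε) M with hcase | hcase
  · have h := key_lemma M Finset.univ x (fun i _ => h0 i) (fun i _ => hub i)
      (r+1) (((r:ℝ)+1)*ε) (by positivity) hcase (by push_cast; linarith)
    push_cast at h
    linarith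
  · -- fallback: ∑ x² ≤ M ∑ x = M ≤ target
    have h : ∑ i, (x i)^2 ≤ ∑ i, M * x i := by
      apply Finset.sum_le_sum
      intro i _
      have := h0 i; have := hub i
      nlinarith
    rw [← Finset.mul_sum, hsum, mul_one] at h
    have he : 0 < ((r:ℝ)+1)*ε := by positivity
    nlinarith
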